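/- Let X_1,...,X_n, X_{n+1},...,X_{n+v} be finite-dimensional subspaces of a vector space such that h(X_i | X_{n+u}) ≤ h(X_i | X_[i+1,n+u−1]) for all 1 ≤ i < ℓ and 1 ≤ u ≤ v. Then for every 1 ≤ j ≤ ℓ: Σ_{u=0}^{v} h(X_j | X_[j+1,n+u]) + Σ_{i<j} h(X_i | X_[i+1,n+v]) ≤ Σ_{i<j} h(X_i | X_[i+1,n] omitting X_j) + Σ_{u=0}^{v} h(X_j | X_[1,n+u] omitting X_j). (Dimension version of Lemma 2: telescoping sum of the chain-rule identity over v+1 extended sequences.) -/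
import Mathlib


open Module Finset

/-- Conditional dimension: `h(A|B) = dim(A+B) - dim(B)`. -/
noncomputable def condDim {F V : Type*} [Field F] [AddCommGroup V] [Module F V]
    (A B : Submodule F V) : ℤ :=
  (finrank F ↥(A ⊔ B) : ℤ) - (finrank F ↥B : ℤ)

section Aux

variable {F V : Type*} [Field F] [AddCommGroup V] [Module F V]

/-- `condDim` is antitone in the second argument (for finite-dimensional data). -/
lemma condDim_anti (A B C : Submodule F V) [FiniteDimensional F A]
    [FiniteDimensional F B] [FiniteDimensional F C] (h : B ≤ C) :
    condDim A C ≤ condDim A B := by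
  have key : ∀ (D : Submodule F V), [FiniteDimensional F D] →
      condDim A D = (finrank F A : ℤ) - (finrank F ↥(A ⊓ D) : ℤ) := by
    intro D _
    have := Submodule.finrank_sup_add_finrank_inf_eq A D
    unfold condDim
    omega
  rw [key B, key C]
  have hle : A ⊓ B ≤ A ⊓ C := inf_le_inf_left A h
  have hfin : FiniteDimensional F ↥(A ⊓ C) :=
    Submodule.finiteDimensional_inf_left A C
  have := Submodule.finrank_mono (R := F) (M := V) hle
  omega

/-- Telescoping sum over `Icc 1 b`. -/
lemma tel_sum (g : ℕ → ℤ) (b : ℕ) :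
    ∑ i ∈ Finset.Icc 1 b, (g i - g (i+1)) = g 1 - g (b+1) := by
  induction b with
  | zero => simp
  | succ b ih =>
      rw [Finset.sum_Icc_succ_top (by omega), ih]
      ring

lemma sup_Icc_eat (X : ℕ → Submodule F V) {a m : ℕ} (h : a ≤ m) :
    X a ⊔ (Finset.Icc (a+1) m).sup X = (Finset.Icc a m).sup X := by
  rw [Finset.Icc_add_one_left_eq_Ioc, ← Finset.Ioc_insert_left h, Finset.sup_insert]

lemma sup_Icc_erase_eat (X : ℕ → Submodule F V) {a m j : ℕ} (h : a ≤ m) (hne : a ≠ j) :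
    X a ⊔ ((Finset.Icc (a+1) m).erase j).sup X = ((Finset.Icc a m).erase j).sup X := by
  rw [Finset.Icc_add_one_left_eq_Ioc, ← Finset.Ioc_insert_left h,
    Finset.erase_insert_of_ne hne, Finset.sup_insert]

end Aux

/-- Lemma 2, dimension version: if
`h(X_i | X_{n+u}) ≤ h(X_i | X_[i+1,n+u-1])` for `1 ≤ i < ℓ`, `1 ≤ u ≤ v`, then for `1 ≤ j ≤ ℓ`,
`Σ_{u=0}^v h(X_j | X_[j+1,n+u]) + Σ_{i<j} h(X_i | X_[i+1,n+v])
  ≤ Σ_{i<j} h(X_i | X_[i+1,n]\j) + Σ_{u=0}^v h(X_j | X_[1,n+u]\j)`. -/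
theorem stmt7 {F V : Type*} [Field F] [AddCommGroup V] [Module F V]
    (X : ℕ → Submodule F V) (hfd : ∀ i, FiniteDimensional F ↥(X i))
    (n ℓ v : ℕ) (hln : ℓ ≤ n)
    (hcond : ∀ i u, 1 ≤ i → i < ℓ → 1 ≤ u → u ≤ v →
      condDim (X i) (X (n+u)) ≤ condDim (X i) ((Finset.Icc (i+1) (n+u-1)).sup X))
    (j : ℕ) (hj1 : 1 ≤ j) (hjl : j ≤ ℓ) :
    (∑ u ∈ Finset.range (v+1), condDim (X j) ((Finset.Icc (j+1) (n+u)).sup X))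
      + ∑ i ∈ Finset.Icc 1 (j-1), condDim (X i) ((Finset.Icc (i+1) (n+v)).sup X)
    ≤ (∑ i ∈ Finset.Icc 1 (j-1), condDim (X i) (((Finset.Icc (i+1) n).erase j).sup X))
      + ∑ u ∈ Finset.range (v+1), condDim (X j) (((Finset.Icc 1 (n+u)).erase j).sup X) := by
  classical
  haveI := hfd
  have hjn : j ≤ n := le_trans hjl hln
  -- The exact chain-rule identity for each length m = n + u.
  have key : ∀ u : ℕ,
      condDim (X j) ((Finset.Icc (j+1) (n+u)).sup X)
        + ∑ i ∈ Finset.Icc 1 (j-1), condDim (X i) ((Finset.Icc (i+1) (n+u)).sup X)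
      = (∑ i ∈ Finset.Icc 1 (j-1), condDim (X i) (((Finset.Icc (i+1) (n+u)).erase j).sup X))
        + condDim (X j) (((Finset.Icc 1 (n+u)).erase j).sup X) := by
    intro u
    set m := n + u with hm
    have hjm : j ≤ m := le_trans hjn (Nat.le_add_right n u)
    set g : ℕ → ℤ := fun i => (finrank F ↥((Finset.Icc i m).sup X) : ℤ) with hg
    set g' : ℕ → ℤ := fun i => (finrank F ↥(((Finset.Icc i m).erase j).sup X) : ℤ) with hg'
    -- LHS computation
    have hL : condDim (X j) ((Finset.Icc (j+1) m).sup X)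
        + ∑ i ∈ Finset.Icc 1 (j-1), condDim (X i) ((Finset.Icc (i+1) m).sup X)
        = g 1 - g (j+1) := by
      have hsplit : ∑ i ∈ Finset.Icc 1 j, condDim (X i) ((Finset.Icc (i+1) m).sup X)
          = ∑ i ∈ Finset.Icc 1 (j-1), condDim (X i) ((Finset.Icc (i+1) m).sup X)
            + condDim (X j) ((Finset.Icc (j+1) m).sup X) := by
        have h1 : j = (j - 1) + 1 := by omega
        rw [h1, Finset.sum_Icc_succ_top (by omega)]
        rw [← h1]
      rw [add_comm, ← hsplit]
      have : ∀ i ∈ Finset.Icc 1 j,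
          condDim (X i) ((Finset.Icc (i+1) m).sup X) = g i - g (i+1) := by
        intro i hi
        rw [Finset.mem_Icc] at hi
        unfold condDim
        rw [sup_Icc_eat X (le_trans hi.2 hjm)]
      rw [Finset.sum_congr rfl this, tel_sum]
    -- RHS computation
    have hR : (∑ i ∈ Finset.Icc 1 (j-1), condDim (X i) (((Finset.Icc (i+1) m).erase j).sup X))
        + condDim (X j) (((Finset.Icc 1 m).erase j).sup X)
        = g 1 - g (j+1) := by
      have htel : ∀ i ∈ Finset.Icc 1 (j-1),
          condDim (X i) (((Finset.Icc (i+1) m).erase j).sup X) = g' i - g' (i+1) := by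
        intro i hi
        rw [Finset.mem_Icc] at hi
        unfold condDim
        rw [sup_Icc_erase_eat X (by omega) (by omega)]
      rw [Finset.sum_congr rfl htel, tel_sum]
      have hgj : g' ((j-1)+1) = g (j+1) := by
        have h1 : (j - 1) + 1 = j := by omega
        rw [h1]
        simp only [hg', hg]
        rw [Finset.Icc_erase_left, ← Finset.Icc_add_one_left_eq_Ioc]
      have hlast : condDim (X j) (((Finset.Icc 1 m).erase j).sup X) = g 1 - g' 1 := by
        unfold condDim
        have : X j ⊔ ((Finset.Icc 1 m).erase j).sup X = (Finset.Icc 1 m).sup X := by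
          conv_rhs => rw [← Finset.insert_erase (Finset.mem_Icc.2 ⟨hj1, hjm⟩)]
          rw [Finset.sup_insert]
        rw [this]
      rw [hgj, hlast]
      ring
    rw [hL, hR]
  -- The per-`i` inequality, by induction.
  have per_i : ∀ i ∈ Finset.Icc 1 (j-1),
      (∑ u ∈ Finset.range (v+1), condDim (X i) (((Finset.Icc (i+1) (n+u)).erase j).sup X))
        + condDim (X i) ((Finset.Icc (i+1) (n+v)).sup X)
      ≤ condDim (X i) (((Finset.Icc (i+1) n).erase j).sup X)
        + ∑ u ∈ Finset.range (v+1), condDim (X i) ((Finset.Icc (i+1) (n+u)).sup X) := by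
    intro i hi
    rw [Finset.mem_Icc] at hi
    have hil : i < ℓ := by omega
    -- key step : condDim Xi (erase-sup up to n+u) ≤ condDim Xi (sup up to n+u-1)
    have step : ∀ u, 1 ≤ u → u ≤ v →
        condDim (X i) (((Finset.Icc (i+1) (n+u)).erase j).sup X)
          ≤ condDim (X i) ((Finset.Icc (i+1) (n+(u-1))).sup X) := by
      intro u hu1 huv
      have h1 : condDim (X i) (((Finset.Icc (i+1) (n+u)).erase j).sup X)
          ≤ condDim (X i) (X (n+u)) := by
        apply condDim_anti
        have hmem : n + u ∈ (Finset.Icc (i+1) (n+u)).erase j := by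
          rw [Finset.mem_erase, Finset.mem_Icc]
          constructor
          · omega
          · omega
        exact Finset.le_sup hmem
      have h2 := hcond i u hi.1 hil hu1 huv
      have h3 : n + u - 1 = n + (u - 1) := by omega
      rw [h3] at h2
      exact le_trans h1 h2
    -- induction: for all w ≤ v,
    -- Σ_{u∈range(w+1)} (cdE u - cdS u) ≤ cdE 0 - cdS w
    have main : ∀ w, w ≤ v →
        (∑ u ∈ Finset.range (w+1),
          (condDim (X i) (((Finset.Icc (i+1) (n+u)).erase j).sup X)
            - condDim (X i) ((Finset.Icc (i+1) (n+u)).sup X)))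
        ≤ condDim (X i) (((Finset.Icc (i+1) (n+0)).erase j).sup X)
          - condDim (X i) ((Finset.Icc (i+1) (n+w)).sup X) := by
      intro w
      induction w with
      | zero => intro _; simp
      | succ w ih =>
          intro hwv
          rw [Finset.sum_range_succ]
          have h1 := ih (by omega)
          have h2 := step (w+1) (by omega) (by omega)
          have h3 : w + 1 - 1 = w := by omega
          rw [h3] at h2
          omega
    have := main v le_rfl
    rw [Finset.sum_sub_distrib] at this
    simp only [Nat.add_zero] at this
    omega
  -- Combine: sum the identity over u, then use per_i.
  have hsum : (∑ u ∈ Finset.range (v+1), condDim (X j) ((Finset.Icc (j+1) (n+u)).sup X))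
      + ∑ u ∈ Finset.range (v+1), ∑ i ∈ Finset.Icc 1 (j-1),
          condDim (X i) ((Finset.Icc (i+1) (n+u)).sup X)
      = (∑ u ∈ Finset.range (v+1), ∑ i ∈ Finset.Icc 1 (j-1),
          condDim (X i) (((Finset.Icc (i+1) (n+u)).erase j).sup X))
        + ∑ u ∈ Finset.range (v+1), condDim (X j) (((Finset.Icc 1 (n+u)).erase j).sup X) := by
    rw [← Finset.sum_add_distrib, ← Finset.sum_add_distrib]
    exact Finset.sum_congr rfl fun u _ => key u
  have hper : (∑ i ∈ Finset.Icc 1 (j-1), ∑ u ∈ Finset.range (v+1),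
        condDim (X i) (((Finset.Icc (i+1) (n+u)).erase j).sup X))
      + ∑ i ∈ Finset.Icc 1 (j-1), condDim (X i) ((Finset.Icc (i+1) (n+v)).sup X)
      ≤ (∑ i ∈ Finset.Icc 1 (j-1), condDim (X i) (((Finset.Icc (i+1) n).erase j).sup X))
        + ∑ i ∈ Finset.Icc 1 (j-1), ∑ u ∈ Finset.range (v+1),
            condDim (X i) ((Finset.Icc (i+1) (n+u)).sup X) := by
    rw [← Finset.sum_add_distrib, ← Finset.sum_add_distrib]
    exact Finset.sum_le_sum per_i
  rw [Finset.sum_comm] at hper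
  conv_rhs at hper =>
    rw [add_comm]
    rw [Finset.sum_comm]
  omega
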